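/- Let A be a ring and S a left denominator set in A. For every left A-module M, the Ore localization M_S, viewed as a left A-module via restriction along A → A_S, satisfies Γ_S(M_S) = 0 and R^iΓ_S(M_S) = 0 for all i ≥ 1; that is, M_S is S-torsion-free and right Γ_S-acyclic. -/

import Mathlib

open CategoryTheory CategoryTheory.Limits OreLocalization

universe u
variable {A : Type u} [Ring A] (S : Submonoid A) [OreSet S]

/-- The `S`-torsion submodule of a module `M`: elements annihilated by some `s ∈ S`. -/
def oreTorsion (M : Type u) [AddCommGroup M] [Module A M] : Submodule A M where
  carrier := {m : M | ∃ s ∈ S, s • m = 0}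
  zero_mem' := ⟨1, S.one_mem, smul_zero _⟩
  add_mem' := by
    rintro x y ⟨a, ha, hax⟩ ⟨b, hb, hby⟩
    refine ⟨(oreDenom b ⟨a, ha⟩ : A) * b, S.mul_mem (oreDenom b ⟨a, ha⟩).2 hb, ?_⟩
    have h := ore_eq b (⟨a, ha⟩ : S)
    have h1 : ((oreDenom b ⟨a, ha⟩ : A) * b) • x = 0 := by
      rw [h, mul_smul, hax, smul_zero]
    have h2 : ((oreDenom b ⟨a, ha⟩ : A) * b) • y = 0 := by
      rw [mul_smul, hby, smul_zero]
    rw [smul_add, h1, h2, add_zero]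
  smul_mem' := by
    rintro c x ⟨a, ha, hax⟩
    refine ⟨(oreDenom c ⟨a, ha⟩ : A), (oreDenom c ⟨a, ha⟩).2, ?_⟩
    have h := ore_eq c (⟨a, ha⟩ : S)
    rw [← mul_smul, h, mul_smul, hax, smul_zero]

/-- The `S`-torsion functor `Γ_S`. -/
def oreTorsionFunctor : ModuleCat.{u} A ⥤ ModuleCat.{u} A where
  obj M := ModuleCat.of A (oreTorsion S M)
  map {M N} f := ModuleCat.ofHom (LinearMap.restrict f.hom (p := oreTorsion S M) (q := oreTorsion S N)
    (fun x hx => by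
      obtain ⟨a, ha, hax⟩ := hx
      exact ⟨a, ha, by rw [← map_smul, hax, map_zero]⟩))
  map_id M := by ext x; rfl
  map_comp f g := by ext x; rfl

instance : (oreTorsionFunctor S).Additive where
  map_add := by intros; ext x; rfl

/-- The canonical localization map `M → M_S`. -/
def oreLocMap (M : Type u) [AddCommGroup M] [Module A M] : M →ₗ[A] OreLocalization S M where
  toFun m := m /ₒ (1 : S)
  map_add' _ _ := add_oreDiv.symm
  map_smul' r m := (smul_oreDiv_one r m).symm



section OreAcyclicAux

namespace OreAcyclic

variable {A : Type u} [Ring A] {S : Submonoid A} [OreSet S]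
variable {M : Type u} [AddCommGroup M] [Module A M]

/-- Lifting a suitably semilinear map `M → J` to a `B`-linear map `M[S⁻¹] → J`. -/
def locLift (J : Type u) [AddCommGroup J] [Module (OreLocalization S A) J]
    (h : M →+ J)
    (hsmul : ∀ (a : A) (m : M), h (a • m) = ((a /ₒ (1 : S)) : OreLocalization S A) • h m) :
    OreLocalization S M →ₗ[OreLocalization S A] J where
  toFun := OreLocalization.liftExpand
    (fun m s => (((1 : A) /ₒ s) : OreLocalization S A) • h m)
    (fun m t s ht => by
      have e1 : ((1 : A) /ₒ s : OreLocalization S A) = (t /ₒ ⟨t * s, ht⟩) := by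
        have := OreLocalization.expand (1 : A) s t (by simpa using ht)
        simpa using this
      rw [hsmul, ← mul_smul, e1, OreLocalization.mul_div_one, one_mul])
  map_add' := fun x y => by
    induction' x using OreLocalization.ind with m s
    induction' y using OreLocalization.ind with m' s'
    rcases oreDivAddChar' m m' s s' with ⟨r'', s'', hr, hx⟩
    rw [hx]
    show (((1 : A) /ₒ (s'' * s)) : OreLocalization S A) • h (s'' • m + r'' • m') =
      (((1 : A) /ₒ s) : OreLocalization S A) • h m +
        (((1 : A) /ₒ s') : OreLocalization S A) • h m'
    have e1 : ((1 : A) /ₒ s : OreLocalization S A) = ((s'' : A) /ₒ (s'' * s)) := by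
      have := OreLocalization.expand' (1 : A) s s''
      simpa [Submonoid.smul_def] using this
    have hr' : r'' * (s' : A) ∈ S := by rw [← hr]; exact (s'' * s).2
    have e2 : ((1 : A) /ₒ s' : OreLocalization S A) = (r'' /ₒ (s'' * s)) := by
      have := OreLocalization.expand (1 : A) s' r'' (by simpa using hr')
      simp only [smul_eq_mul, mul_one] at this
      rw [this]
      congr 1
      ext
      exact hr.symm
    rw [Submonoid.smul_def, map_add, hsmul, hsmul, smul_add, ← mul_smul, ← mul_smul,
      OreLocalization.mul_div_one, OreLocalization.mul_div_one, one_mul, one_mul, e1, e2]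
  map_smul' := fun z x => by
    induction' z using OreLocalization.ind with r t
    induction' x using OreLocalization.ind with m s
    rcases oreDivSMulChar' r m t s with ⟨r', s', hs, hx⟩
    rw [hx]
    show (((1 : A) /ₒ (s' * t)) : OreLocalization S A) • h (r' • m) =
      (r /ₒ t) • ((((1 : A) /ₒ s) : OreLocalization S A) • h m)
    rw [hsmul, ← mul_smul, ← mul_smul, OreLocalization.mul_div_one, one_mul,
      OreLocalization.oreDiv_mul_char r 1 t s r' s' hs, mul_one]

@[simp]
lemma locLift_apply (J : Type u) [AddCommGroup J] [Module (OreLocalization S A) J]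
    (h : M →+ J) (hsmul) (m : M) (s : S) :
    locLift J h hsmul (m /ₒ s) = (((1 : A) /ₒ s) : OreLocalization S A) • h m := rfl

variable {N : Type u} [AddCommGroup N] [Module A N]

/-- Localization of a linear map. -/
def locMap (g : M →ₗ[A] N) :
    OreLocalization S M →ₗ[OreLocalization S A] OreLocalization S N :=
  locLift (OreLocalization S N)
    ((AddMonoidHom.mk' (fun n => n /ₒ (1 : S)) (fun _ _ => add_oreDiv.symm)).comp
      g.toAddMonoidHom)
    (fun a m => by
      dsimp
      show (g (a • m)) /ₒ (1 : S) = ((a /ₒ (1 : S)) : OreLocalization S A) • (g m /ₒ (1 : S))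
      rw [map_smul, ← smul_oreDiv_one, ← oreDiv_one_smul])

lemma locMap_apply (g : M →ₗ[A] N) (m : M) (s : S) :
    locMap g (m /ₒ s) = g m /ₒ s := by
  show (((1 : A) /ₒ s) : OreLocalization S A) • (g m /ₒ (1 : S)) = g m /ₒ s
  rw [OreLocalization.smul_div_one, one_smul]

lemma locMap_injective (g : M →ₗ[A] N) (hg : Function.Injective g) :
    Function.Injective (locMap (S := S) g) := by
  have key : ∀ x, locMap (S := S) g x = 0 → x = 0 := by
    intro x hx
    induction' x using OreLocalization.ind with m s
    rw [locMap_apply, ← OreLocalization.zero_oreDiv (X := N) s] at hx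
    obtain ⟨u, v, h1, h2⟩ := OreLocalization.oreDiv_eq_iff.mp hx
    rw [smul_zero] at h1
    have hvm : g (v • m) = 0 := by rw [map_smul, ← h1]
    have hv : v * (s : A) ∈ S := by rw [← h2]; exact (u * s).2
    have hvm0 : v • m = 0 := hg (by rw [map_smul, ← h1, map_zero])
    rw [OreLocalization.expand m s v hv, hvm0, OreLocalization.zero_oreDiv]
  intro x y hxy
  have h := key (x - y) (by rw [map_sub, hxy, sub_self])
  exact sub_eq_zero.mp h

variable (S) in
lemma injective_restrict_ore (J : ModuleCat.{u} (OreLocalization S A)) [Injective J] :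
    Injective ((ModuleCat.restrictScalars
      (numeratorRingHom : A →+* OreLocalization S A)).obj J) := by
  constructor
  intro P Q g f hf
  have hfinj : Function.Injective f := (ModuleCat.mono_iff_injective f).mp hf
  -- the B-linear extension of g to P[S⁻¹]
  let gB : ModuleCat.of (OreLocalization S A) (OreLocalization S P) ⟶ J :=
    ModuleCat.ofHom (locLift J g.hom.toAddMonoidHom (fun a p => by
      show g.hom (a • p) = ((a /ₒ (1 : S)) : OreLocalization S A) • g.hom p
      rw [map_smul g.hom a p]
      rfl))
  let fB : ModuleCat.of (OreLocalization S A) (OreLocalization S P) ⟶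
      ModuleCat.of (OreLocalization S A) (OreLocalization S Q) := ModuleCat.ofHom (locMap f.hom)
  haveI : Mono fB := (ModuleCat.mono_iff_injective fB).mpr (locMap_injective f.hom hfinj)
  obtain ⟨k, hk⟩ := Injective.factors gB fB
  letI : Module A J := Module.compHom _ (numeratorRingHom : A →+* OreLocalization S A)
  refine ⟨@ModuleCat.ofHom A _ Q J _ _ _ (Module.compHom _ (numeratorRingHom : A →+* OreLocalization S A))
          { toFun := fun q => k (q /ₒ (1 : S)),
            map_add' := fun q q' => by
              show k ((q + q') /ₒ (1 : S)) = k (q /ₒ (1 : S)) + k (q' /ₒ (1 : S))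
              rw [← add_oreDiv, map_add],
            map_smul' := fun a q => by
              dsimp only [RingHom.id_apply]
              rw [← smul_oreDiv_one, ← oreDiv_one_smul, k.hom.map_smul]
              rfl }, ?_⟩
  · ext p
    show k (f p /ₒ (1 : S)) = g p
    have h1 : f p /ₒ (1 : S) = fB (p /ₒ (1 : S)) := (locMap_apply f.hom p 1).symm
    rw [h1]
    have h2 := congrFun (congrArg (fun (t : _ ⟶ J) => (t : OreLocalization S ↑P → ↑J)) hk)
      (p /ₒ (1 : S))
    have h3 : gB (p /ₒ (1 : S)) = g p := by
      show (((1 : A) /ₒ (1 : S)) : OreLocalization S A) • g p = g p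
      rw [← OreLocalization.one_def, one_smul]
    exact h2.trans h3


variable (S) in
lemma torsion_eq_bot_aux (N : Type u) [AddCommGroup N] [Module A N]
    [Module (OreLocalization S A) N]
    (hc : ∀ (a : A) (x : N), a • x = ((a /ₒ (1 : S)) : OreLocalization S A) • x) :
    oreTorsion S N = ⊥ := by
  rw [eq_bot_iff]
  rintro x ⟨s, hs, h0⟩
  simp only [Submodule.mem_bot]
  rw [hc] at h0
  have h1 : (((↑(1 : S) : A) /ₒ (⟨s, hs⟩ : S) : OreLocalization S A) *
      (((↑(⟨s, hs⟩ : S) : A)) /ₒ (1 : S))) • x = 0 := by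
    rw [mul_smul, h0, smul_zero]
  rw [OreLocalization.mul_inv (1 : S) (⟨s, hs⟩ : S), one_smul] at h1
  exact h1

variable (S) in
lemma torsion_loc_eq_bot (M : Type u) [AddCommGroup M] [Module A M] :
    oreTorsion S (OreLocalization S M) = ⊥ :=
  torsion_eq_bot_aux S _ (fun a x => (oreDiv_one_smul a x).symm)

variable (S) in
lemma torsion_restrict_eq_bot (J : ModuleCat.{u} (OreLocalization S A)) :
    oreTorsion S ((ModuleCat.restrictScalars
      (numeratorRingHom : A →+* OreLocalization S A)).obj J) = ⊥ :=
  torsion_eq_bot_aux S _ (fun _ _ => rfl)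

instance restrictScalarsAdditive {R S' : Type u} [Ring R] [Ring S'] (f : R →+* S') :
    (ModuleCat.restrictScalars.{u} f).Additive where
  map_add := rfl

noncomputable instance restrictScalarsPFL {R S' : Type u} [Ring R] [Ring S'] (f : R →+* S') :
    PreservesFiniteLimits (ModuleCat.restrictScalars.{u} f) where
  preservesFiniteLimits _ := { preservesLimit := ModuleCat.preservesLimit_restrictScalars f _ }

noncomputable instance restrictScalarsPFC {R S' : Type u} [Ring R] [Ring S'] (f : R →+* S') :
    PreservesFiniteColimits (ModuleCat.restrictScalars.{u} f) where
  preservesFiniteColimits _ := { preservesColimit := ModuleCat.preservesColimit_restrictScalars f _ }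

variable (S) in
/-- Restriction of an injective resolution over the Ore localization ring yields an injective
resolution over the base ring. -/
noncomputable def restrictResolution (Y : ModuleCat.{u} (OreLocalization S A))
    (I : InjectiveResolution Y) :
    InjectiveResolution ((ModuleCat.restrictScalars
      (numeratorRingHom : A →+* OreLocalization S A)).obj Y) where
  cocomplex := ((ModuleCat.restrictScalars
      (numeratorRingHom : A →+* OreLocalization S A)).mapHomologicalComplex
      (ComplexShape.up ℕ)).obj I.cocomplex
  injective n := injective_restrict_ore S (I.cocomplex.X n)
  ι := (HomologicalComplex.singleMapHomologicalComplex (ModuleCat.restrictScalars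
      (numeratorRingHom : A →+* OreLocalization S A)) (ComplexShape.up ℕ) 0).inv.app Y ≫
    ((ModuleCat.restrictScalars
      (numeratorRingHom : A →+* OreLocalization S A)).mapHomologicalComplex
      (ComplexShape.up ℕ)).map I.ι
  quasiIso := by infer_instance

end OreAcyclic

end OreAcyclicAux

/-- For a left denominator set `S` in a ring `A`, the Ore localization `M_S` of any left
`A`-module `M`, viewed as a left `A`-module, is `S`-torsion-free and right `Γ_S`-acyclic:
`Γ_S (M_S) = 0` and `R^i Γ_S (M_S) = 0` for all `i ≥ 1`. -/
theorem ore_localization_torsionfree_and_acyclic (M : Type u) [AddCommGroup M] [Module A M] :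
    oreTorsion S (OreLocalization S M) = ⊥ ∧
    ∀ i : ℕ, 1 ≤ i →
      IsZero (((oreTorsionFunctor S).rightDerived i).obj
        (ModuleCat.of A (OreLocalization S M))) := by
  constructor
  · exact OreAcyclic.torsion_loc_eq_bot S M
  · intro i _
    letI B := OreLocalization S A
    let Y : ModuleCat.{u} B := ModuleCat.of B (OreLocalization S M)
    let I : InjectiveResolution Y := InjectiveResolution.of Y
    let R := OreAcyclic.restrictResolution S Y I
    let e : ModuleCat.of A (OreLocalization S M) ≅
        (ModuleCat.restrictScalars (numeratorRingHom : A →+* B)).obj Y :=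
      { hom := @ModuleCat.ofHom A _ (OreLocalization S M) Y _ _ _ (Module.compHom _ (numeratorRingHom : A →+* B))
               (@LinearMap.mk A A _ _ (RingHom.id A) (OreLocalization S M) Y _ _ _
                 (Module.compHom _ (numeratorRingHom : A →+* B)) ⟨id, fun _ _ => rfl⟩
                 (fun a x => (oreDiv_one_smul a x).symm))
        inv := @ModuleCat.ofHom A _ Y (OreLocalization S M) _ (Module.compHom _ (numeratorRingHom : A →+* B)) _ _
               (@LinearMap.mk A A _ _ (RingHom.id A) Y (OreLocalization S M) _ _
                 (Module.compHom _ (numeratorRingHom : A →+* B)) _ ⟨id, fun _ _ => rfl⟩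
                 (fun a x => oreDiv_one_smul a x))
        hom_inv_id := rfl
        inv_hom_id := rfl }
    refine IsZero.of_iso ?_ ((((oreTorsionFunctor S).rightDerived i).mapIso e) ≪≫
      R.isoRightDerivedObj (oreTorsionFunctor S) i)
    erw [← HomologicalComplex.exactAt_iff_isZero_homology]
    have hsub : Subsingleton (oreTorsion S ((ModuleCat.restrictScalars
        (numeratorRingHom : A →+* B)).obj (I.cocomplex.X i))) := by
      rw [OreAcyclic.torsion_restrict_eq_bot]
      infer_instance
    have hz : IsZero ((oreTorsionFunctor S).obj ((ModuleCat.restrictScalars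
        (numeratorRingHom : A →+* B)).obj (I.cocomplex.X i))) :=
      @ModuleCat.isZero_of_subsingleton _ _ (ModuleCat.of A (oreTorsion S
        ((ModuleCat.restrictScalars (numeratorRingHom : A →+* B)).obj (I.cocomplex.X i)))) hsub
    exact ShortComplex.exact_of_isZero_X₂ _ hz
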